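/- Let P ∈ R be irreducible and let λ₀, λ₁, λ₂, λ₃ be complex numbers such that D(P) = (λ₀Y₀ + λ₁Y₁ + λ₂Y₂ + λ₃)·P. Then λ₀, λ₁ and λ₂ are rational numbers. -/

import Mathlib

open MvPolynomial

/-- In `R = ℂ[T,Q,Y₀,Y₁,Y₂]` (variables `X 0 = T`, `X 1 = Q`, `X 2 = Y₀`, `X 3 = Y₁`,
`X 4 = Y₂`), the polynomial `L = (1/4)(a(Y₀−Y₁)² + b(Y₀−Y₂)² + c(Y₁−Y₂)²)`. -/
noncomputable def Lpoly5 (a b c : ℂ) : MvPolynomial (Fin 5) ℂ :=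
  C (1 / 4 : ℂ) * (C a * (X 2 - X 3) ^ 2 + C b * (X 2 - X 4) ^ 2 + C c * (X 3 - X 4) ^ 2)


noncomputable section Stmt8AuxSection

abbrev A5 : Type := MvPolynomial (Fin 5) ℂ

namespace Stmt8Aux

/-- A derivation commutes with an algebra endomorphism if it does on generators. -/
lemma comm_lemma (π : A5 →ₐ[ℂ] A5) (d d' : Derivation ℂ A5 A5)
    (h : ∀ i, π (d (X i)) = d' (π (X i))) (p : A5) : π (d p) = d' (π p) := by
  induction p using MvPolynomial.induction_on with
  | C a =>
      rw [derivation_C, map_zero, ← MvPolynomial.algebraMap_eq, AlgHom.commutes,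
        Derivation.map_algebraMap]
  | add p q hp hq => rw [map_add, map_add, map_add, map_add, hp, hq]
  | mul_X p n hp =>
      rw [Derivation.leibniz, smul_eq_mul, smul_eq_mul, map_add, map_mul, map_mul, map_mul,
        Derivation.leibniz, smul_eq_mul, smul_eq_mul, hp, h]

lemma dvd_lemma (π₁ π₂ : A5 →ₐ[ℂ] A5) (ℓ : A5) (h : ∀ i, ℓ ∣ π₁ (X i) - π₂ (X i)) (p : A5) :
    ℓ ∣ π₁ p - π₂ p := by
  induction p using MvPolynomial.induction_on with
  | C a =>
      rw [← MvPolynomial.algebraMap_eq, AlgHom.commutes, AlgHom.commutes, sub_self]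
      exact dvd_zero _
  | add p q hp hq =>
      have h2 : π₁ (p + q) - π₂ (p + q) = (π₁ p - π₂ p) + (π₁ q - π₂ q) := by
        rw [map_add, map_add]; ring
      rw [h2]; exact dvd_add hp hq
  | mul_X p n hp =>
      have h2 : π₁ (p * X n) - π₂ (p * X n)
          = (π₁ p - π₂ p) * π₁ (X n) + π₂ p * (π₁ (X n) - π₂ (X n)) := by
        rw [map_mul, map_mul]; ring
      rw [h2]; exact dvd_add (hp.mul_right _) ((h n).mul_left _)

lemma darboux_step (d : Derivation ℂ A5 A5) (ℓ Λ Γ F : A5) (hl : d ℓ = Λ * ℓ)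
    (hl0 : ℓ ≠ 0) (hlu : ¬ IsUnit ℓ) (hF : F ≠ 0) (hdF : d F = Γ * F) :
    ∃ (k : ℕ) (H : A5), ¬ ℓ ∣ H ∧ F = ℓ ^ k * H ∧ d H = (Γ - C (k : ℂ) * Λ) * H := by
  obtain ⟨k, H, hH, rfl⟩ := WfDvdMonoid.max_power_factor' hF hlu
  refine ⟨k, H, hH, rfl, ?_⟩
  have hne : (ℓ ^ k : A5) ≠ 0 := pow_ne_zero _ hl0
  have expand : d (ℓ ^ k * H) = ℓ ^ k * (d H + C (k : ℂ) * Λ * H) := by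
    rw [Derivation.leibniz, Derivation.leibniz_pow, hl, smul_eq_mul, smul_eq_mul]
    cases k with
    | zero => simp
    | succ k =>
        simp only [smul_eq_mul, nsmul_eq_mul, Nat.add_sub_cancel, ← MvPolynomial.C_eq_coe_nat]
        push_cast
        ring
  have key : ℓ ^ k * (d H + C (k : ℂ) * Λ * H)
      = ℓ ^ k * ((Γ - C (k : ℂ) * Λ) * H + C (k : ℂ) * Λ * H) := by
    rw [← expand, hdF]; ring
  have := mul_left_cancel₀ hne key
  linear_combination this

lemma deriv_sum (d : Derivation ℂ A5 A5) (p : A5) :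
    d p = ∑ i : Fin 5, d (X i) * pderiv i p := by
  induction p using MvPolynomial.induction_on with
  | C a => simp [derivation_C, pderiv_C]
  | add p q hp hq =>
      simp only [map_add, hp, hq, mul_add, ← Finset.sum_add_distrib]
  | mul_X p n hp =>
      rw [Derivation.leibniz, smul_eq_mul, smul_eq_mul, hp]
      have step : ∀ i : Fin 5, d (X i) * pderiv i (p * X n)
          = X n * (d (X i) * pderiv i p) + (if i = n then d (X n) * p else 0) := by
        intro i
        rw [pderiv_mul]
        by_cases h : i = n
        · subst h; rw [pderiv_X_self]; simp; ring
        · rw [pderiv_X_of_ne (Ne.symm h), if_neg h]; simp; ring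
      simp only [step, Finset.sum_add_distrib, ← Finset.mul_sum]
      rw [Finset.sum_ite_eq' Finset.univ n (fun _ => d (X n) * p), if_pos (Finset.mem_univ n)]
      ring

lemma coeff_pderiv (i : Fin 5) (ν : Fin 5 →₀ ℕ) (p : A5) :
    coeff ν (pderiv i p) = ((ν i : ℂ) + 1) * coeff (ν + Finsupp.single i 1) p := by
  induction p using MvPolynomial.induction_on' with
  | add p q hp hq => simp only [map_add, coeff_add, hp, hq]; ring
  | monomial s a =>
      rw [pderiv_monomial, coeff_monomial, coeff_monomial]
      by_cases h : s = ν + Finsupp.single i 1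
      · subst h
        have h1 : ν + Finsupp.single i 1 - Finsupp.single i 1 = ν := by
          rw [add_tsub_cancel_right]
        have h2 : ((ν + Finsupp.single i 1 : Fin 5 →₀ ℕ)) i = ν i + 1 := by
          rw [Finsupp.add_apply, Finsupp.single_eq_same]
        rw [h1, h2, if_pos rfl, if_pos rfl]
        push_cast; ring
      · rw [if_neg h]
        by_cases h2 : s - Finsupp.single i 1 = ν
        · have hsi : s i = 0 := by
            by_contra hsi
            apply h
            have hle : Finsupp.single i 1 ≤ s := by
              rw [Finsupp.single_le_iff]; omega
            rw [← h2, tsub_add_cancel_of_le hle]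
          rw [if_pos h2, hsi]
          simp
        · rw [if_neg h2, mul_zero]

lemma final_step (d : Derivation ℂ A5 A5) (w0 w1 κ σ ρ : ℂ)
    (h0 : d (X 0) = C w0) (h1 : d (X 1) = C w1 * X 1) (h2 : d (X 2) = C κ * X 2 ^ 2)
    (G : A5) (hG : G ≠ 0) (hp3 : pderiv 3 G = 0) (hp4 : pderiv 4 G = 0)
    (hdG : d G = (C σ * X 2 + C ρ) * G) :
    σ = κ * (degreeOf 2 G : ℂ) := by
  classical
  set n := degreeOf 2 G with hn
  -- a monomial of G attaining the degree in X 2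
  obtain ⟨d₀, hd₀mem, hd₀⟩ : ∃ d₀ ∈ G.support, n = d₀ 2 := by
    rw [hn, degreeOf_eq_sup]
    exact Finset.exists_mem_eq_sup _ (support_nonempty.mpr hG) _
  have hbound : ∀ ν : Fin 5 →₀ ℕ, ν 2 = n + 1 → coeff ν G = 0 := by
    intro ν hν
    by_contra hc
    have : ν 2 ≤ n := by
      rw [hn, degreeOf_eq_sup]
      exact Finset.le_sup (f := fun m : Fin 5 →₀ ℕ => m 2) (mem_support_iff.mpr hc)
    omega
  set μ : Fin 5 →₀ ℕ := d₀ + Finsupp.single 2 1 with hμ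
  have hμ2 : μ 2 = n + 1 := by
    rw [hμ, Finsupp.add_apply, Finsupp.single_eq_same, hd₀]
  have hμsub : μ - Finsupp.single 2 1 = d₀ := by rw [hμ, add_tsub_cancel_right]
  -- rewrite d G
  have hsum : d G = C w0 * pderiv 0 G + (C w1 * X 1) * pderiv 1 G
      + (C κ * X 2 ^ 2) * pderiv 2 G := by
    rw [deriv_sum d G, Fin.sum_univ_five]
    norm_num [h0, h1, h2, hp3, hp4]
  rw [hsum] at hdG
  have hcoeff := congrArg (coeff μ) hdG
  -- LHS pieces
  have e0 : coeff μ (C w0 * pderiv 0 G) = 0 := by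
    rw [coeff_C_mul, coeff_pderiv]
    have : ((μ + Finsupp.single 0 1 : Fin 5 →₀ ℕ)) 2 = n + 1 := by
      rw [Finsupp.add_apply, hμ2, Finsupp.single_apply, if_neg (show ¬(0:Fin 5) = 2 by decide)]
      omega
    rw [hbound _ this, mul_zero, mul_zero]
  have e1 : coeff μ (C w1 * X 1 * pderiv 1 G) = 0 := by
    rw [mul_assoc, coeff_C_mul, coeff_X_mul']
    by_cases h : (1 : Fin 5) ∈ μ.support
    · rw [if_pos h, coeff_pderiv]
      have hle : Finsupp.single (1 : Fin 5) 1 ≤ μ := by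
        rw [Finsupp.single_le_iff]
        have := Finsupp.mem_support_iff.mp h; omega
      have hback : μ - Finsupp.single 1 1 + Finsupp.single 1 1 = μ :=
        tsub_add_cancel_of_le hle
      rw [hback, hbound μ hμ2]
      ring
    · rw [if_neg h, mul_zero]
  have e2 : coeff μ (C κ * X 2 ^ 2 * pderiv 2 G) = κ * ((n : ℂ) * coeff d₀ G) := by
    have hX : (C κ * X 2 ^ 2 * pderiv 2 G : A5) = C κ * (X 2 * (X 2 * pderiv 2 G)) := by ring
    rw [hX, coeff_C_mul, coeff_X_mul']
    have hμs : (2 : Fin 5) ∈ μ.support := by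
      rw [Finsupp.mem_support_iff, hμ2]; omega
    rw [if_pos hμs, hμsub, coeff_X_mul']
    by_cases h : (2 : Fin 5) ∈ d₀.support
    · rw [if_pos h, coeff_pderiv]
      have hd2 : 1 ≤ d₀ 2 := by simpa [Finsupp.mem_support_iff, Nat.one_le_iff_ne_zero] using h
      have hle : Finsupp.single (2 : Fin 5) 1 ≤ d₀ := by
        rw [Finsupp.single_le_iff]; omega
      have hback : d₀ - Finsupp.single 2 1 + Finsupp.single 2 1 = d₀ :=
        tsub_add_cancel_of_le hle
      rw [hback]
      have happ : ((d₀ - Finsupp.single 2 1 : Fin 5 →₀ ℕ)) 2 = n - 1 := by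
        rw [Finsupp.tsub_apply, Finsupp.single_eq_same, ← hd₀]
      rw [happ]
      have : ((n - 1 : ℕ) : ℂ) + 1 = (n : ℂ) := by
        have : (1:ℕ) ≤ n := by omega
        push_cast [Nat.cast_sub this]
        ring
      rw [this]
    · rw [if_neg h]
      have hd2 : d₀ 2 = 0 := by simpa [Finsupp.mem_support_iff] using h
      have : n = 0 := by rw [hd₀, hd2]
      rw [this]
      norm_num
  -- RHS
  have eR : coeff μ ((C σ * X 2 + C ρ) * G) = σ * coeff d₀ G := by
    have hX : ((C σ * X 2 + C ρ) * G : A5) = C σ * (X 2 * G) + C ρ * G := by ring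
    rw [hX, coeff_add, coeff_C_mul, coeff_C_mul, coeff_X_mul']
    have hμs : (2 : Fin 5) ∈ μ.support := by
      rw [Finsupp.mem_support_iff, hμ2]; omega
    rw [if_pos hμs, hμsub, hbound μ hμ2]
    ring
  rw [coeff_add, coeff_add, e0, e1, e2, eR] at hcoeff
  have hc0 : coeff d₀ G ≠ 0 := mem_support_iff.mp hd₀mem
  have : (κ * (n:ℂ) - σ) * coeff d₀ G = 0 := by linear_combination hcoeff
  rcases mul_eq_zero.mp this with h | h
  · linear_combination -h
  · exact absurd h hc0

lemma pderiv_zero_lemma (π : A5 →ₐ[ℂ] A5) (j : Fin 5)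
    (h : ∀ i, pderiv j (π (X i)) = 0) (p : A5) : pderiv j (π p) = 0 := by
  induction p using MvPolynomial.induction_on with
  | C a =>
      rw [← MvPolynomial.algebraMap_eq, AlgHom.commutes, MvPolynomial.algebraMap_eq, pderiv_C]
  | add p q hp hq => rw [map_add, map_add, hp, hq, add_zero]
  | mul_X p n hp => rw [map_mul, pderiv_mul, hp, h, mul_zero, zero_mul, add_zero]

set_option maxHeartbeats 2000000 in
lemma master (a b c w : ℂ) (e : ℚ) (he0 : 0 < e) (he1 : e < 1)
    (hbc : b + c = 1 - (e : ℂ) ^ 2)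
    (D : Derivation ℂ A5 A5)
    (hDT : D (X 0) = C w) (hDQ : D (X 1) = C w * X 1)
    (hDY0 : D (X 2) = X 2 ^ 2 - Lpoly5 a b c)
    (hDY1 : D (X 3) = X 3 ^ 2 - Lpoly5 a b c)
    (hDY2 : D (X 4) = X 4 ^ 2 - Lpoly5 a b c)
    (P : A5) (hP : P ≠ 0) (l₀ l₁ l₂ l₃ : ℂ)
    (hDP : D P = (C l₀ * X 2 + C l₁ * X 3 + C l₂ * X 4 + C l₃) * P) :
    (∃ r : ℚ, l₂ = (r : ℂ)) ∧ (∃ r : ℚ, l₀ + l₁ = (r : ℂ)) := by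
  classical
  set m : ℚ := (1 - e ^ 2) / 4 with hm
  have hmC : b + c = 4 * ((m : ℂ)) := by push_cast [hm]; rw [hbc]; ring
  set Γ : A5 := C l₀ * X 2 + C l₁ * X 3 + C l₂ * X 4 + C l₃ with hΓ
  set M : A5 := C ((m : ℚ) : ℂ) * (X 2 - X 4) ^ 2 with hM
  -- step 1 : remove the invariant plane X2 = X3
  have hl₀d : D (X 2 - X 3) = (X 2 + X 3) * (X 2 - X 3) := by
    rw [map_sub, hDY0, hDY1]; ring
  have hl₀0 : (X 2 - X 3 : A5) ≠ 0 := by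
    intro h
    have h2 := congrArg (aeval (fun i : Fin 5 => if i = 2 then (1 : ℂ) else 0)) h
    simp at h2
  have hl₀u : ¬ IsUnit (X 2 - X 3 : A5) := by
    intro h
    have h2 := h.map constantCoeff
    rw [map_sub, constantCoeff_X, constantCoeff_X, sub_zero] at h2
    exact not_isUnit_zero h2
  obtain ⟨k, H, hHnd, hPf, hDH⟩ := darboux_step D _ _ Γ P hl₀d hl₀0 hl₀u hP hDP
  -- the merging substitution
  set g₁ : Fin 5 → A5 := fun i => if i = 3 then X 2 else X i with hg₁
  set π₁ : A5 →ₐ[ℂ] A5 := aeval g₁ with hπ₁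
  have hπ₁X : ∀ i, π₁ (X i) = g₁ i := fun i => aeval_X _ i
  -- the derivation downstairs
  set v₁ : Fin 5 → A5 := fun i => if i = 0 then C w else if i = 1 then C w * X 1
    else (X i) ^ 2 - M with hv₁
  set D₁ : Derivation ℂ A5 A5 := mkDerivation ℂ v₁ with hD₁
  have hD₁X : ∀ i, D₁ (X i) = v₁ i := fun i => mkDerivation_X _ _ i
  -- image of L
  have hsplitC : (C (4 * ((m:ℚ):ℂ)) : A5) = 4 * C ((m:ℚ):ℂ) := by
    simp only [map_mul, map_ofNat]
  have hCsum : (C b + C c : A5) = 4 * C ((m:ℚ):ℂ) := by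
    rw [← hsplitC, ← C_add]; exact congrArg _ hmC
  have hg₁0 : g₁ 0 = X 0 := rfl
  have hg₁1 : g₁ 1 = X 1 := rfl
  have hg₁2 : g₁ 2 = X 2 := rfl
  have hg₁3 : g₁ 3 = X 2 := rfl
  have hg₁4 : g₁ 4 = X 4 := rfl
  have hv₁0 : v₁ 0 = C w := rfl
  have hv₁1 : v₁ 1 = C w * X 1 := rfl
  have hv₁2 : v₁ 2 = X 2 ^ 2 - M := rfl
  have hv₁3 : v₁ 3 = X 3 ^ 2 - M := rfl
  have hv₁4 : v₁ 4 = X 4 ^ 2 - M := rfl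
  have hquarter : (4 : A5) * C (1/4 : ℂ) = 1 := by
    rw [← map_ofNat (C : ℂ →+* A5) 4, ← C_mul]
    norm_num
  have hLπ : π₁ (Lpoly5 a b c) = M := by
    simp only [Lpoly5, map_mul, map_add, map_sub, map_pow, hπ₁X, algHom_C,
      MvPolynomial.algebraMap_eq, hg₁2, hg₁3, hg₁4, hM]
    linear_combination ((X 2 - X 4 : A5) ^ 2 * C (1/4 : ℂ)) * hCsum
      + (C ((m:ℚ):ℂ) * (X 2 - X 4 : A5) ^ 2) * hquarter
  have hcomm1 : ∀ p, π₁ (D p) = D₁ (π₁ p) := by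
    apply comm_lemma
    intro i
    fin_cases i
    · show π₁ (D (X 0)) = D₁ (π₁ (X 0))
      rw [hDT, hπ₁X, hg₁0, algHom_C, MvPolynomial.algebraMap_eq, hD₁X, hv₁0]
    · show π₁ (D (X 1)) = D₁ (π₁ (X 1))
      rw [hDQ, map_mul, algHom_C, MvPolynomial.algebraMap_eq, hπ₁X, hg₁1, hD₁X, hv₁1]
    · show π₁ (D (X 2)) = D₁ (π₁ (X 2))
      rw [hDY0, map_sub, map_pow, hπ₁X, hg₁2, hLπ, hD₁X, hv₁2]
    · show π₁ (D (X 3)) = D₁ (π₁ (X 3))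
      rw [hDY1, map_sub, map_pow, hπ₁X, hg₁3, hLπ, hD₁X, hv₁2]
    · show π₁ (D (X 4)) = D₁ (π₁ (X 4))
      rw [hDY2, map_sub, map_pow, hπ₁X, hg₁4, hLπ, hD₁X, hv₁4]
  -- step 1 conclusion
  set P₁ : A5 := π₁ H with hP₁def
  have hgen₁ : ∀ i, (X 2 - X 3 : A5) ∣ π₁ (X i) - AlgHom.id ℂ A5 (X i) := by
    intro i
    rw [AlgHom.id_apply, hπ₁X]
    fin_cases i
    · show (X 2 - X 3 : A5) ∣ g₁ 0 - X 0; rw [hg₁0, sub_self]; exact dvd_zero _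
    · show (X 2 - X 3 : A5) ∣ g₁ 1 - X 1; rw [hg₁1, sub_self]; exact dvd_zero _
    · show (X 2 - X 3 : A5) ∣ g₁ 2 - X 2; rw [hg₁2, sub_self]; exact dvd_zero _
    · show (X 2 - X 3 : A5) ∣ g₁ 3 - X 3; rw [hg₁3]
    · show (X 2 - X 3 : A5) ∣ g₁ 4 - X 4; rw [hg₁4, sub_self]; exact dvd_zero _
  have hP₁0 : P₁ ≠ 0 := by
    intro h0
    apply hHnd
    have hdvd := dvd_lemma π₁ (AlgHom.id ℂ A5) (X 2 - X 3) hgen₁ H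
    rw [AlgHom.id_apply, ← hP₁def, h0, zero_sub] at hdvd
    exact (dvd_neg).mp hdvd
  have hC2 : (C (2:ℂ) : A5) = 2 := map_ofNat (C : ℂ →+* A5) 2
  have hD₁P₁ : D₁ P₁ = (C (l₀ + l₁ - 2*(k:ℂ)) * X 2 + C l₂ * X 4 + C l₃) * P₁ := by
    rw [hP₁def, ← hcomm1 H, hDH, map_mul]
    congr 1
    rw [hΓ]
    simp only [map_add, map_sub, map_mul, algHom_C, MvPolynomial.algebraMap_eq, hπ₁X,
      hg₁2, hg₁3, hg₁4]
    rw [hC2]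
    ring
  have hcomp : π₁.comp π₁ = π₁ := by
    rw [hπ₁, comp_aeval]
    congr 1
    funext i
    fin_cases i
    · show aeval g₁ (g₁ 0) = g₁ 0; rw [hg₁0, ← hπ₁, hπ₁X, hg₁0]
    · show aeval g₁ (g₁ 1) = g₁ 1; rw [hg₁1, ← hπ₁, hπ₁X, hg₁1]
    · show aeval g₁ (g₁ 2) = g₁ 2; rw [hg₁2, ← hπ₁, hπ₁X, hg₁2]
    · show aeval g₁ (g₁ 3) = g₁ 3; rw [hg₁3, ← hπ₁, hπ₁X, hg₁2]
    · show aeval g₁ (g₁ 4) = g₁ 4; rw [hg₁4, ← hπ₁, hπ₁X, hg₁4]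
  have hfix1 : π₁ P₁ = P₁ := by
    rw [hP₁def, ← AlgHom.comp_apply, hcomp]
  -- the key step : for each rational root t, a rational relation
  have key : ∀ t c₁ c₂ κ : ℚ, t*t - t = m*(1-t)^3 → c₂ = 1 - (1-t)*m →
      c₁ = t*c₂ + 2*(1-t)*m → κ = 1 - m*(1-t)^2 →
      ∃ r : ℚ, l₀ + l₁ + (t:ℂ)*l₂ = (r:ℂ) := by
    intro t c₁ c₂ κ hroot hc2 hc1 hκ
    have hrootA : (C (t:ℂ) * C (t:ℂ) - C (t:ℂ) : A5)
        = C ((m:ℚ):ℂ) * (1 - C (t:ℂ))^3 := by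
      have h' : ((t:ℂ))*(t:ℂ) - (t:ℂ) = ((m:ℚ):ℂ)*(1-(t:ℂ))^3 := by exact_mod_cast hroot
      simpa only [map_mul, map_sub, map_pow, map_one] using congrArg (⇑(C : ℂ →+* A5)) h'
    have hc2A : (C (c₂:ℂ) : A5) = 1 - (1 - C (t:ℂ)) * C ((m:ℚ):ℂ) := by
      have h' : ((c₂:ℂ)) = 1 - (1-(t:ℂ))*((m:ℚ):ℂ) := by exact_mod_cast hc2
      simpa only [map_mul, map_sub, map_one] using congrArg (⇑(C : ℂ →+* A5)) h'
    have hc1A : (C (c₁:ℂ) : A5) = C (t:ℂ) * C (c₂:ℂ) + 2 * (1 - C (t:ℂ)) * C ((m:ℚ):ℂ) := by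
      have h' : ((c₁:ℂ)) = (t:ℂ)*(c₂:ℂ) + 2*(1-(t:ℂ))*((m:ℚ):ℂ) := by exact_mod_cast hc1
      simpa only [map_mul, map_add, map_sub, map_one, map_ofNat]
        using congrArg (⇑(C : ℂ →+* A5)) h'
    have hκA : (C (κ:ℂ) : A5) = 1 - C ((m:ℚ):ℂ) * (1 - C (t:ℂ))^2 := by
      have h' : ((κ:ℂ)) = 1 - ((m:ℚ):ℂ)*(1-(t:ℂ))^2 := by exact_mod_cast hκ
      simpa only [map_mul, map_sub, map_pow, map_one] using congrArg (⇑(C : ℂ →+* A5)) h'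
    set ℓ : A5 := X 4 - C (t:ℂ) * X 2 with hℓ
    have hD₁ℓ : D₁ ℓ = (C ((c₁:ℚ):ℂ) * X 2 + C ((c₂:ℚ):ℂ) * X 4) * ℓ := by
      rw [hℓ, map_sub, Derivation.leibniz, derivation_C, hD₁X, hD₁X, hv₁2, hv₁4, hM]
      simp only [smul_eq_mul, mul_zero, add_zero, zero_mul]
      linear_combination (X 2^2*C ((t:ℚ):ℂ) - X 2*X 4) * hc1A
        + ((X 2:A5)^2*C ((t:ℚ):ℂ)^2 - X 4^2) * hc2A + (X 2:A5)^2 * hrootA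
    have hℓ0 : ℓ ≠ 0 := by
      rw [hℓ]
      intro h0
      have h2 := congrArg (aeval (fun i : Fin 5 => if i = 4 then (1:ℂ) else 0)) h0
      simp at h2
    have hℓu : ¬ IsUnit ℓ := by
      intro hu
      have h2 := hu.map constantCoeff
      rw [hℓ, map_sub, map_mul, constantCoeff_X, constantCoeff_X, mul_zero, sub_zero] at h2
      exact not_isUnit_zero h2
    obtain ⟨k', H₂, hH₂nd, hP₁f, hDH₂⟩ := darboux_step D₁ ℓ _ _ P₁ hD₁ℓ hℓ0 hℓu hP₁0 hD₁P₁
    have hπ₁ℓ : π₁ ℓ = ℓ := by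
      rw [hℓ]
      simp only [map_sub, map_mul, algHom_C, MvPolynomial.algebraMap_eq, hπ₁X, hg₁2, hg₁4]
    have hfixH₂ : π₁ H₂ = H₂ := by
      have h1 : ℓ ^ k' * π₁ H₂ = ℓ ^ k' * H₂ := by
        calc ℓ ^ k' * π₁ H₂ = π₁ (ℓ ^ k' * H₂) := by rw [map_mul, map_pow, hπ₁ℓ]
        _ = π₁ P₁ := by rw [← hP₁f]
        _ = P₁ := hfix1
        _ = ℓ ^ k' * H₂ := hP₁f
      exact mul_left_cancel₀ (pow_ne_zero _ hℓ0) h1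
    set g₂ : Fin 5 → A5 := fun i => if i = 3 then X 2
      else if i = 4 then C (t:ℂ) * X 2 else X i with hg₂
    set π₂ : A5 →ₐ[ℂ] A5 := aeval g₂ with hπ₂def
    have hπ₂X : ∀ i, π₂ (X i) = g₂ i := fun i => aeval_X _ i
    have hg₂0 : g₂ 0 = X 0 := rfl
    have hg₂1 : g₂ 1 = X 1 := rfl
    have hg₂2 : g₂ 2 = X 2 := rfl
    have hg₂3 : g₂ 3 = X 2 := rfl
    have hg₂4 : g₂ 4 = C (t:ℂ) * X 2 := rfl
    set G : A5 := π₂ H₂ with hGdef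
    have hG0 : G ≠ 0 := by
      intro h0
      apply hH₂nd
      have hgen : ∀ i, ℓ ∣ π₁ (X i) - π₂ (X i) := by
        intro i
        rw [hπ₁X, hπ₂X]
        fin_cases i
        · show ℓ ∣ g₁ 0 - g₂ 0; rw [hg₁0, hg₂0, sub_self]; exact dvd_zero _
        · show ℓ ∣ g₁ 1 - g₂ 1; rw [hg₁1, hg₂1, sub_self]; exact dvd_zero _
        · show ℓ ∣ g₁ 2 - g₂ 2; rw [hg₁2, hg₂2, sub_self]; exact dvd_zero _
        · show ℓ ∣ g₁ 3 - g₂ 3; rw [hg₁3, hg₂3, sub_self]; exact dvd_zero _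
        · show ℓ ∣ g₁ 4 - g₂ 4; rw [hg₁4, hg₂4, ← hℓ]
      have hdvd := dvd_lemma π₁ π₂ ℓ hgen H₂
      rw [hfixH₂, ← hGdef, h0, sub_zero] at hdvd
      exact hdvd
    set v₂ : Fin 5 → A5 := fun i => if i = 0 then C w else if i = 1 then C w * X 1
      else if i = 4 then C (t:ℂ) * (C ((κ:ℚ):ℂ) * X 2 ^ 2)
      else C ((κ:ℚ):ℂ) * X 2 ^ 2 with hv₂
    set D₂ : Derivation ℂ A5 A5 := mkDerivation ℂ v₂ with hD₂def
    have hD₂X : ∀ i, D₂ (X i) = v₂ i := fun i => mkDerivation_X _ _ i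
    have hv₂0 : v₂ 0 = C w := rfl
    have hv₂1 : v₂ 1 = C w * X 1 := rfl
    have hv₂2 : v₂ 2 = C ((κ:ℚ):ℂ) * X 2 ^ 2 := rfl
    have hv₂3 : v₂ 3 = C ((κ:ℚ):ℂ) * X 2 ^ 2 := rfl
    have hv₂4 : v₂ 4 = C (t:ℂ) * (C ((κ:ℚ):ℂ) * X 2 ^ 2) := rfl
    have hcomm2 : ∀ p, π₂ (D₁ p) = D₂ (π₂ p) := by
      apply comm_lemma
      intro i
      fin_cases i
      · show π₂ (D₁ (X 0)) = D₂ (π₂ (X 0))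
        rw [hD₁X, hv₁0, algHom_C, MvPolynomial.algebraMap_eq, hπ₂X, hg₂0, hD₂X, hv₂0]
      · show π₂ (D₁ (X 1)) = D₂ (π₂ (X 1))
        rw [hD₁X, hv₁1, map_mul, algHom_C, MvPolynomial.algebraMap_eq, hπ₂X, hg₂1, hD₂X, hv₂1]
      · show π₂ (D₁ (X 2)) = D₂ (π₂ (X 2))
        rw [hD₁X, hv₁2, hM, hπ₂X, hg₂2, hD₂X, hv₂2]
        simp only [map_sub, map_pow, map_mul, algHom_C, MvPolynomial.algebraMap_eq, hπ₂X,
          hg₂2, hg₂4]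
        linear_combination (-(X 2:A5)^2) * hκA
      · show π₂ (D₁ (X 3)) = D₂ (π₂ (X 3))
        rw [hD₁X, hv₁3, hM, hπ₂X, hg₂3, hD₂X, hv₂2]
        simp only [map_sub, map_pow, map_mul, algHom_C, MvPolynomial.algebraMap_eq, hπ₂X,
          hg₂3, hg₂2, hg₂4]
        linear_combination (-(X 2:A5)^2) * hκA
      · show π₂ (D₁ (X 4)) = D₂ (π₂ (X 4))
        rw [hD₁X, hv₁4, hM, hπ₂X, hg₂4, Derivation.leibniz, derivation_C, hD₂X, hv₂2]
        simp only [smul_eq_mul, mul_zero, add_zero, zero_mul, map_sub, map_pow, map_mul,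
          algHom_C, MvPolynomial.algebraMap_eq, hπ₂X, hg₂4, hg₂2]
        linear_combination (-(X 2:A5)^2 * C ((t:ℚ):ℂ)) * hκA + (X 2:A5)^2 * hrootA
    set σ : ℂ := (l₀ + l₁) - 2*(k:ℂ) + (t:ℂ)*l₂ - (k':ℂ)*((c₁:ℂ) + (t:ℂ)*(c₂:ℂ)) with hσdef
    have hD₂G : D₂ G = (C σ * X 2 + C l₃) * G := by
      rw [hGdef, ← hcomm2 H₂, hDH₂, map_mul]
      congr 1
      simp only [map_add, map_sub, map_mul, algHom_C, MvPolynomial.algebraMap_eq, hπ₂X,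
        hg₂2, hg₂4]
      have hsplit2 : (C σ : A5)
          = C l₀ + C l₁ - C 2*C (k:ℂ) + C ((t:ℚ):ℂ)*C l₂
            - C ((k':ℕ):ℂ)*(C ((c₁:ℚ):ℂ) + C ((t:ℚ):ℂ)*C ((c₂:ℚ):ℂ)) := by
        rw [hσdef]
        simp only [map_add, map_sub, map_mul]
      rw [hsplit2]
      ring
    have hp3G : pderiv 3 G = 0 := by
      rw [hGdef]
      apply pderiv_zero_lemma
      intro i
      rw [hπ₂X]
      fin_cases i
      · show pderiv 3 (g₂ 0) = 0; rw [hg₂0]; exact pderiv_X_of_ne (by decide)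
      · show pderiv 3 (g₂ 1) = 0; rw [hg₂1]; exact pderiv_X_of_ne (by decide)
      · show pderiv 3 (g₂ 2) = 0; rw [hg₂2]; exact pderiv_X_of_ne (by decide)
      · show pderiv 3 (g₂ 3) = 0; rw [hg₂3]; exact pderiv_X_of_ne (by decide)
      · show pderiv 3 (g₂ 4) = 0
        rw [hg₂4, pderiv_mul, pderiv_C, pderiv_X_of_ne (by decide), mul_zero, zero_mul,
          add_zero]
    have hp4G : pderiv 4 G = 0 := by
      rw [hGdef]
      apply pderiv_zero_lemma
      intro i
      rw [hπ₂X]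
      fin_cases i
      · show pderiv 4 (g₂ 0) = 0; rw [hg₂0]; exact pderiv_X_of_ne (by decide)
      · show pderiv 4 (g₂ 1) = 0; rw [hg₂1]; exact pderiv_X_of_ne (by decide)
      · show pderiv 4 (g₂ 2) = 0; rw [hg₂2]; exact pderiv_X_of_ne (by decide)
      · show pderiv 4 (g₂ 3) = 0; rw [hg₂3]; exact pderiv_X_of_ne (by decide)
      · show pderiv 4 (g₂ 4) = 0
        rw [hg₂4, pderiv_mul, pderiv_C, pderiv_X_of_ne (by decide), mul_zero, zero_mul,
          add_zero]
    have hσ := final_step D₂ w w ((κ:ℚ):ℂ) σ l₃ (by rw [hD₂X, hv₂0]) (by rw [hD₂X, hv₂1])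
      (by rw [hD₂X, hv₂2]) G hG0 hp3G hp4G hD₂G
    refine ⟨κ * (degreeOf 2 G : ℚ) + 2*(k:ℚ) + (k':ℚ)*(c₁ + t*c₂), ?_⟩
    rw [hσdef] at hσ
    push_cast
    linear_combination hσ
  -- instantiate at the two rational roots
  have hden1 : (1+e : ℚ) ≠ 0 := by linarith
  have hden2 : (1-e : ℚ) ≠ 0 := by intro h0; linarith
  set t₁q : ℚ := -(1-e)/(1+e) with ht₁q
  set t₂q : ℚ := -(1+e)/(1-e) with ht₂q
  have root1 : t₁q * t₁q - t₁q = m * (1 - t₁q)^3 := by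
    rw [ht₁q, hm]; field_simp; ring
  have root2 : t₂q * t₂q - t₂q = m * (1 - t₂q)^3 := by
    rw [ht₂q, hm]; field_simp; ring
  obtain ⟨r₁, hr₁⟩ := key t₁q _ _ _ root1 rfl rfl rfl
  obtain ⟨r₂, hr₂⟩ := key t₂q _ _ _ root2 rfl rfl rfl
  have htne : t₁q ≠ t₂q := by
    rw [ht₁q, ht₂q]
    intro h0
    rw [div_eq_div_iff hden1 hden2] at h0
    nlinarith
  set Δ : ℚ := t₁q - t₂q with hΔ
  have hΔne : Δ ≠ 0 := sub_ne_zero.mpr htne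
  have hΔCne : ((Δ:ℚ):ℂ) ≠ 0 := by exact_mod_cast hΔne
  have hsub : ((Δ:ℚ):ℂ) * l₂ = ((r₁ - r₂ : ℚ):ℂ) := by
    push_cast [hΔ]
    linear_combination hr₁ - hr₂
  set s : ℚ := (r₁ - r₂)/Δ with hs
  have hl₂val : l₂ = (s:ℂ) := by
    rw [hs, Rat.cast_div, eq_div_iff hΔCne]
    push_cast at hsub ⊢
    linear_combination hsub
  have hr₁' := hr₁
  rw [hl₂val] at hr₁'
  refine ⟨⟨s, hl₂val⟩, ⟨r₁ - t₁q*s, ?_⟩⟩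
  push_cast
  linear_combination hr₁'

end Stmt8Aux

end Stmt8AuxSection

/-- if `P ∈ R` is irreducible and `D P = (λ₀Y₀ + λ₁Y₁ + λ₂Y₂ + λ₃)·P`, then
`λ₀, λ₁, λ₂` are rational numbers. -/
theorem stmt_8 (α β γ : ℚ)
    (hα : ∃ n : ℕ, 0 < n ∧ α = 1 / n) (hβ : ∃ n : ℕ, 0 < n ∧ β = 1 / n)
    (hγ : ∃ n : ℕ, 0 < n ∧ γ = 1 / n)
    (h0 : 0 < α) (h1 : α < β) (h2 : β < γ) (h3 : γ < 1) (h4 : α + β < γ)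
    (a b c w : ℂ)
    (ha : a = (γ : ℂ) * (1 - (α : ℂ) - (β : ℂ)) + 2 * (α : ℂ) * (β : ℂ))
    (hb : b = ((α : ℂ) + (β : ℂ)) * ((γ : ℂ) - (α : ℂ) - (β : ℂ)) +
        2 * (α : ℂ) * (β : ℂ) - (γ : ℂ) + 1)
    (hc : c = (γ : ℂ) * ((α : ℂ) + (β : ℂ) - (γ : ℂ) + 1) - 2 * (α : ℂ) * (β : ℂ))
    (hw : w = 1 - (γ : ℂ))
    (D : Derivation ℂ (MvPolynomial (Fin 5) ℂ) (MvPolynomial (Fin 5) ℂ))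
    (hDT : D (X 0) = C w)
    (hDQ : D (X 1) = C w * X 1)
    (hDY0 : D (X 2) = (X 2) ^ 2 - Lpoly5 a b c)
    (hDY1 : D (X 3) = (X 3) ^ 2 - Lpoly5 a b c)
    (hDY2 : D (X 4) = (X 4) ^ 2 - Lpoly5 a b c)
    (P : MvPolynomial (Fin 5) ℂ) (hP : Irreducible P) (l₀ l₁ l₂ l₃ : ℂ)
    (hDP : D P = (C l₀ * X 2 + C l₁ * X 3 + C l₂ * X 4 + C l₃) * P) :
    (∃ r : ℚ, l₀ = (r : ℂ)) ∧ (∃ r : ℚ, l₁ = (r : ℂ)) ∧ (∃ r : ℚ, l₂ = (r : ℂ)) := by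
  classical
  have hP0 : P ≠ 0 := hP.ne_zero
  -- first application of the master lemma, with e = γ - α - β
  have hbc1 : b + c = 1 - ((γ - α - β : ℚ) : ℂ)^2 := by
    rw [hb, hc]; push_cast; ring
  obtain ⟨hl₂rat, hl₀₁rat⟩ := Stmt8Aux.master a b c w (γ - α - β) (by linarith) (by linarith)
    hbc1 D hDT hDQ hDY0 hDY1 hDY2 P hP0 l₀ l₁ l₂ l₃ hDP
  -- second application after swapping the variables X 3 and X 4
  set sw : Equiv.Perm (Fin 5) := Equiv.swap 3 4 with hsw
  have hsw0 : sw 0 = 0 := by rw [hsw]; exact Equiv.swap_apply_of_ne_of_ne (by decide) (by decide)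
  have hsw1 : sw 1 = 1 := by rw [hsw]; exact Equiv.swap_apply_of_ne_of_ne (by decide) (by decide)
  have hsw2 : sw 2 = 2 := by rw [hsw]; exact Equiv.swap_apply_of_ne_of_ne (by decide) (by decide)
  have hsw3 : sw 3 = 4 := by rw [hsw]; exact Equiv.swap_apply_left _ _
  have hsw4 : sw 4 = 3 := by rw [hsw]; exact Equiv.swap_apply_right _ _
  set ρ : MvPolynomial (Fin 5) ℂ →ₐ[ℂ] MvPolynomial (Fin 5) ℂ := rename sw with hρ
  set v' : Fin 5 → A5 := fun i => if i = 0 then C w else if i = 1 then C w * X 1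
    else X i ^ 2 - Lpoly5 b a c with hv'
  set D' : Derivation ℂ A5 A5 := mkDerivation ℂ v' with hD'
  have hD'X : ∀ i, D' (X i) = v' i := fun i => mkDerivation_X _ _ i
  have hv'0 : v' 0 = C w := rfl
  have hv'1 : v' 1 = C w * X 1 := rfl
  have hv'2 : v' 2 = X 2 ^ 2 - Lpoly5 b a c := rfl
  have hv'3 : v' 3 = X 3 ^ 2 - Lpoly5 b a c := rfl
  have hv'4 : v' 4 = X 4 ^ 2 - Lpoly5 b a c := rfl
  have hρL : rename sw (Lpoly5 a b c) = Lpoly5 b a c := by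
    simp only [Lpoly5, map_mul, map_add, map_sub, map_pow, rename_C, rename_X,
      hsw2, hsw3, hsw4]
    ring
  have hcommρ : ∀ p, ρ (D p) = D' (ρ p) := by
    apply Stmt8Aux.comm_lemma
    intro i
    fin_cases i
    · show ρ (D (X 0)) = D' (ρ (X 0))
      rw [hDT, hρ, rename_C, rename_X, hsw0, hD'X, hv'0]
    · show ρ (D (X 1)) = D' (ρ (X 1))
      rw [hDQ, hρ, map_mul, rename_C, rename_X, hsw1, hD'X, hv'1]
    · show ρ (D (X 2)) = D' (ρ (X 2))
      rw [hDY0, hρ, map_sub, map_pow, rename_X, hsw2, hρL, hD'X, hv'2]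
    · show ρ (D (X 3)) = D' (ρ (X 3))
      rw [hDY1, hρ, map_sub, map_pow, rename_X, hsw3, hρL, hD'X, hv'4]
    · show ρ (D (X 4)) = D' (ρ (X 4))
      rw [hDY2, hρ, map_sub, map_pow, rename_X, hsw4, hρL, hD'X, hv'3]
  have hρP0 : ρ P ≠ 0 := by
    intro h0
    apply hP0
    apply rename_injective sw sw.injective
    rw [hρ] at h0
    rw [h0, map_zero]
  have hDP' : D' (ρ P) = (C l₀ * X 2 + C l₂ * X 3 + C l₁ * X 4 + C l₃) * ρ P := by
    rw [← hcommρ P, hDP, map_mul]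
    congr 1
    rw [hρ]
    simp only [map_add, map_mul, rename_C, rename_X, hsw2, hsw3, hsw4]
    ring
  have hbc2 : a + c = 1 - ((1 - γ : ℚ) : ℂ)^2 := by
    rw [ha, hc]; push_cast; ring
  obtain ⟨hl₁rat, hl₀₂rat⟩ := Stmt8Aux.master b a c w (1 - γ) (by linarith) (by linarith)
    hbc2 D' (by rw [hD'X, hv'0]) (by rw [hD'X, hv'1]) (by rw [hD'X, hv'2])
    (by rw [hD'X, hv'3]) (by rw [hD'X, hv'4]) (ρ P) hρP0 l₀ l₂ l₁ l₃ hDP'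
  obtain ⟨r2, hr2⟩ := hl₂rat
  obtain ⟨r01, hr01⟩ := hl₀₁rat
  obtain ⟨r1, hr1⟩ := hl₁rat
  refine ⟨⟨r01 - r1, ?_⟩, ⟨r1, hr1⟩, ⟨r2, hr2⟩⟩
  push_cast
  linear_combination hr01 - hr1
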